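/- For P, Q ∈ Γ_n with 0 < r ≤ p_i/q_i ≤ R for all i, (1/R)·I(P||Q) ≤ G(P||Q) ≤ (1/r)·I(P||Q), where G(P||Q) = ∑((p_i+q_i)/2)ln((p_i+q_i)/(2p_i)) and I(P||Q) = (1/2)∑[p_i ln(2p_i/(p_i+q_i)) + q_i ln(2q_i/(p_i+q_i))]. -/

import Mathlib

open Finset Real
noncomputable def FF (c b a x : ℝ) : ℝ :=
  c*((x+1)/2)*(Real.log (x+1) - Real.log 2 - Real.log x) + b*Real.log x + a*(x-1)

lemma FF_one (c b a : ℝ) : FF c b a 1 = 0 := by norm_num [FF]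

lemma FF_deriv (c b a : ℝ) {x : ℝ} (hx : 0 < x) :
    HasDerivAt (FF c b a)
      (c/2*(Real.log (x+1) - Real.log 2 - Real.log x) + (b - c/2)/x + a) x := by
  have hx1 : (0:ℝ) < x + 1 := by linarith
  have h1 : HasDerivAt (fun y : ℝ => y + 1) 1 x := (hasDerivAt_id x).add_const 1
  have hlog1 : HasDerivAt (fun y : ℝ => Real.log (y+1)) (1/(x+1)) x := by
    have := (Real.hasDerivAt_log hx1.ne').comp x h1
    simpa [one_div, Function.comp_def] using this
  have hlog2 : HasDerivAt Real.log x⁻¹ x := Real.hasDerivAt_log hx.ne'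
  have hL : HasDerivAt (fun y => Real.log (y+1) - Real.log 2 - Real.log y)
      (1/(x+1) - x⁻¹) x := by
    simpa [Pi.sub_def] using (hlog1.sub_const (Real.log 2)).sub hlog2
  have hM : HasDerivAt (fun y : ℝ => c*((y+1)/2)) (c * (1/2)) x := by
    simpa using (h1.div_const 2).const_mul c
  have hFull := (hM.mul hL).add (((hlog2.const_mul b)).add
      (((hasDerivAt_id x).sub_const 1).const_mul a))
  have heq : (fun y : ℝ => c * ((y + 1) / 2) * (Real.log (y + 1) - Real.log 2 - Real.log y)
      + (b * Real.log y + a * (id y - 1))) = FF c b a := by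
    funext y; simp [FF]; ring
  simp only [Pi.mul_def, Pi.add_def] at hFull
  rw [heq] at hFull
  refine hFull.congr_deriv ?_
  field_simp
  ring

lemma log_expand {x : ℝ} (hx : 0 < x) :
    Real.log (x+1) - Real.log 2 - Real.log x = Real.log ((x+1)/(2*x)) := by
  rw [Real.log_div (by linarith) (by positivity), Real.log_mul two_ne_zero hx.ne']
  ring

lemma lemA {R t : ℝ} (hR : 1 ≤ R) (ht : 0 < t) (htR : t ≤ R) :
    0 ≤ FF (R+1) (1/2) (R/2) t := by
  rcases le_total 1 t with h1 | h1
  · have mono : MonotoneOn (FF (R+1) (1/2) (R/2)) (Set.Icc 1 R) := by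
      apply monotoneOn_of_deriv_nonneg (convex_Icc 1 R)
      · intro x hx
        have hx0 : 0 < x := lt_of_lt_of_le one_pos hx.1
        exact (FF_deriv _ _ _ hx0).continuousAt.continuousWithinAt
      · intro x hx
        rw [interior_Icc] at hx
        obtain ⟨hxl, hxr2⟩ := hx
        have hx0 : 0 < x := lt_trans one_pos hxl
        exact (FF_deriv _ _ _ hx0).differentiableAt.differentiableWithinAt
      · intro x hx
        rw [interior_Icc] at hx
        obtain ⟨hxl, hxr2⟩ := hx
        have hx0 : 0 < x := lt_trans one_pos hxl
        have hx1 : (0:ℝ) < x + 1 := by linarith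
        rw [(FF_deriv (R+1) (1/2) (R/2) hx0).deriv]
        have hlb : 1 - (2*x)/(x+1) ≤ Real.log ((x+1)/(2*x)) := by
          have h := Real.one_sub_inv_le_log_of_pos (show 0 < (x+1)/(2*x) by positivity)
          rwa [inv_div] at h
        have hmul : (R+1)/2 * (1 - (2*x)/(x+1)) ≤ (R+1)/2 * Real.log ((x+1)/(2*x)) :=
          mul_le_mul_of_nonneg_left hlb (by linarith)
        have hkey : (R+1)/2*(1 - (2*x)/(x+1)) + (1/2 - (R+1)/2)/x + R/2
            = (x-1)*(R-x)/(2*(x*(x+1))) := by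
          field_simp
          ring
        have hpos : 0 ≤ (x-1)*(R-x)/(2*(x*(x+1))) := by
          apply div_nonneg (mul_nonneg (by linarith) (by linarith)) (by positivity)
        rw [log_expand hx0]
        linarith
    have h := mono (Set.mem_Icc.2 ⟨le_refl 1, hR⟩) (Set.mem_Icc.2 ⟨h1, htR⟩) h1
    rwa [FF_one] at h
  · have anti : AntitoneOn (FF (R+1) (1/2) (R/2)) (Set.Icc t 1) := by
      apply antitoneOn_of_deriv_nonpos (convex_Icc t 1)
      · intro x hx
        have hx0 : 0 < x := lt_of_lt_of_le ht hx.1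
        exact (FF_deriv _ _ _ hx0).continuousAt.continuousWithinAt
      · intro x hx
        rw [interior_Icc] at hx
        obtain ⟨hxl, hxr2⟩ := hx
        have hx0 : 0 < x := lt_trans ht hxl
        exact (FF_deriv _ _ _ hx0).differentiableAt.differentiableWithinAt
      · intro x hx
        rw [interior_Icc] at hx
        obtain ⟨hxl, hxr2⟩ := hx
        have hx0 : 0 < x := lt_trans ht hxl
        have hx1 : (0:ℝ) < x + 1 := by linarith
        rw [(FF_deriv (R+1) (1/2) (R/2) hx0).deriv]
        have hub : Real.log ((x+1)/(2*x)) ≤ (x+1)/(2*x) - 1 :=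
          Real.log_le_sub_one_of_pos (by positivity)
        have hmul : (R+1)/2 * Real.log ((x+1)/(2*x)) ≤ (R+1)/2 * ((x+1)/(2*x) - 1) :=
          mul_le_mul_of_nonneg_left hub (by linarith)
        have hkey : (R+1)/2*((x+1)/(2*x) - 1) + (1/2 - (R+1)/2)/x + R/2
            = -((1-x)*(R-1)/(4*x)) := by
          field_simp
          ring
        have hpos : 0 ≤ (1-x)*(R-1)/(4*x) := by
          apply div_nonneg (mul_nonneg (by linarith [hxr2]) (by linarith)) (by positivity)
        rw [log_expand hx0]
        linarith
    have h := anti (Set.mem_Icc.2 ⟨le_refl t, h1⟩) (Set.mem_Icc.2 ⟨h1, le_refl 1⟩) h1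
    rwa [FF_one] at h

lemma lemB {r t : ℝ} (hr : 0 < r) (hr1 : r ≤ 1) (htr : r ≤ t) :
    0 ≤ FF (-(1+r)) (-(1/2)) (-(r/2)) t := by
  have ht : 0 < t := lt_of_lt_of_le hr htr
  rcases le_total 1 t with h1 | h1
  · have mono : MonotoneOn (FF (-(1+r)) (-(1/2)) (-(r/2))) (Set.Icc 1 t) := by
      apply monotoneOn_of_deriv_nonneg (convex_Icc 1 t)
      · intro x hx
        have hx0 : 0 < x := lt_of_lt_of_le one_pos hx.1
        exact (FF_deriv _ _ _ hx0).continuousAt.continuousWithinAt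
      · intro x hx
        rw [interior_Icc] at hx
        obtain ⟨hxl, hxr2⟩ := hx
        have hx0 : 0 < x := lt_trans one_pos hxl
        exact (FF_deriv _ _ _ hx0).differentiableAt.differentiableWithinAt
      · intro x hx
        rw [interior_Icc] at hx
        obtain ⟨hxl, hxr2⟩ := hx
        have hx0 : 0 < x := lt_trans one_pos hxl
        have hx1 : (0:ℝ) < x + 1 := by linarith
        rw [(FF_deriv _ _ _ hx0).deriv]
        have hub : Real.log ((x+1)/(2*x)) ≤ (x+1)/(2*x) - 1 :=
          Real.log_le_sub_one_of_pos (by positivity)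
        have hmul : -(1+r)/2 * ((x+1)/(2*x) - 1) ≤ -(1+r)/2 * Real.log ((x+1)/(2*x)) := by
          apply mul_le_mul_of_nonpos_left hub (by linarith)
        have hkey : -(1+r)/2*((x+1)/(2*x) - 1) + (-(1/2) - -(1+r)/2)/x + -(r/2)
            = (x-1)*(1-r)/(4*x) := by
          field_simp
          ring
        have hpos : 0 ≤ (x-1)*(1-r)/(4*x) := by
          apply div_nonneg (mul_nonneg (by linarith) (by linarith)) (by positivity)
        rw [log_expand hx0]
        linarith
    have h := mono (Set.mem_Icc.2 ⟨le_refl 1, h1⟩) (Set.mem_Icc.2 ⟨h1, le_refl t⟩) h1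
    rwa [FF_one] at h
  · have anti : AntitoneOn (FF (-(1+r)) (-(1/2)) (-(r/2))) (Set.Icc t 1) := by
      apply antitoneOn_of_deriv_nonpos (convex_Icc t 1)
      · intro x hx
        have hx0 : 0 < x := lt_of_lt_of_le ht hx.1
        exact (FF_deriv _ _ _ hx0).continuousAt.continuousWithinAt
      · intro x hx
        rw [interior_Icc] at hx
        obtain ⟨hxl, hxr2⟩ := hx
        have hx0 : 0 < x := lt_trans ht hxl
        exact (FF_deriv _ _ _ hx0).differentiableAt.differentiableWithinAt
      · intro x hx
        rw [interior_Icc] at hx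
        obtain ⟨hxl, hxr2⟩ := hx
        have hx0 : 0 < x := lt_trans ht hxl
        have hxr : r ≤ x := le_trans htr hxl.le
        have hx1 : (0:ℝ) < x + 1 := by linarith
        rw [(FF_deriv _ _ _ hx0).deriv]
        have hlb : 1 - (2*x)/(x+1) ≤ Real.log ((x+1)/(2*x)) := by
          have h := Real.one_sub_inv_le_log_of_pos (show 0 < (x+1)/(2*x) by positivity)
          rwa [inv_div] at h
        have hmul : -(1+r)/2 * Real.log ((x+1)/(2*x)) ≤ -(1+r)/2 * (1 - (2*x)/(x+1)) := by
          apply mul_le_mul_of_nonpos_left hlb (by linarith)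
        have hkey : -(1+r)/2*(1 - (2*x)/(x+1)) + (-(1/2) - -(1+r)/2)/x + -(r/2)
            = -((1-x)*(x-r)/(2*(x*(x+1)))) := by
          field_simp
          ring
        have hpos : 0 ≤ (1-x)*(x-r)/(2*(x*(x+1))) := by
          apply div_nonneg (mul_nonneg (by linarith [hxr2]) (by linarith)) (by positivity)
        rw [log_expand hx0]
        linarith
    have h := anti (Set.mem_Icc.2 ⟨le_refl t, h1⟩) (Set.mem_Icc.2 ⟨h1, le_refl 1⟩) h1
    rwa [FF_one] at h

lemma keyA (R pp qq : ℝ) (hpp : 0 < pp) (hqq : 0 < qq) :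
    R * (((pp+qq)/2) * Real.log ((pp+qq)/(2*pp)))
      - (1/2) * (pp * Real.log (2*pp/(pp+qq)) + qq * Real.log (2*qq/(pp+qq)))
    = qq * FF (R+1) (1/2) (R/2) (pp/qq) - (R/2)*(pp - qq) := by
  have hs : (0:ℝ) < pp + qq := by linarith
  have e1 : Real.log ((pp+qq)/(2*pp)) = Real.log (pp+qq) - Real.log 2 - Real.log pp := by
    rw [Real.log_div hs.ne' (by positivity), Real.log_mul two_ne_zero hpp.ne']; ring
  have e2 : Real.log (2*pp/(pp+qq)) = Real.log 2 + Real.log pp - Real.log (pp+qq) := by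
    rw [Real.log_div (by positivity) hs.ne', Real.log_mul two_ne_zero hpp.ne']
  have e3 : Real.log (2*qq/(pp+qq)) = Real.log 2 + Real.log qq - Real.log (pp+qq) := by
    rw [Real.log_div (by positivity) hs.ne', Real.log_mul two_ne_zero hqq.ne']
  have e4 : pp/qq + 1 = (pp+qq)/qq := by field_simp
  have e5 : Real.log ((pp+qq)/qq) = Real.log (pp+qq) - Real.log qq :=
    Real.log_div hs.ne' hqq.ne'
  have e6 : Real.log (pp/qq) = Real.log pp - Real.log qq := Real.log_div hpp.ne' hqq.ne'
  simp only [FF, e4, e1, e2, e3, e5, e6]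
  field_simp
  ring

lemma keyB (r pp qq : ℝ) (hpp : 0 < pp) (hqq : 0 < qq) :
    (1/2) * (pp * Real.log (2*pp/(pp+qq)) + qq * Real.log (2*qq/(pp+qq)))
      - r * (((pp+qq)/2) * Real.log ((pp+qq)/(2*pp)))
    = qq * FF (-(1+r)) (-(1/2)) (-(r/2)) (pp/qq) + (r/2)*(pp - qq) := by
  have hs : (0:ℝ) < pp + qq := by linarith
  have e1 : Real.log ((pp+qq)/(2*pp)) = Real.log (pp+qq) - Real.log 2 - Real.log pp := by
    rw [Real.log_div hs.ne' (by positivity), Real.log_mul two_ne_zero hpp.ne']; ring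
  have e2 : Real.log (2*pp/(pp+qq)) = Real.log 2 + Real.log pp - Real.log (pp+qq) := by
    rw [Real.log_div (by positivity) hs.ne', Real.log_mul two_ne_zero hpp.ne']
  have e3 : Real.log (2*qq/(pp+qq)) = Real.log 2 + Real.log qq - Real.log (pp+qq) := by
    rw [Real.log_div (by positivity) hs.ne', Real.log_mul two_ne_zero hqq.ne']
  have e4 : pp/qq + 1 = (pp+qq)/qq := by field_simp
  have e5 : Real.log ((pp+qq)/qq) = Real.log (pp+qq) - Real.log qq :=
    Real.log_div hs.ne' hqq.ne'
  have e6 : Real.log (pp/qq) = Real.log pp - Real.log qq := Real.log_div hpp.ne' hqq.ne'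
  simp only [FF, e4, e1, e2, e3, e5, e6]
  field_simp
  ring


theorem stmt15 (n : ℕ) (p q : Fin n → ℝ)
    (hp : ∀ i, 0 < p i) (hq : ∀ i, 0 < q i)
    (hp1 : ∑ i, p i = 1) (hq1 : ∑ i, q i = 1)
    (r R : ℝ) (hr : 0 < r) (hrR : ∀ i, r ≤ p i / q i ∧ p i / q i ≤ R) :
    (1/R) * (((1:ℝ)/2) * ∑ i, (p i * Real.log (2 * p i / (p i + q i)) + q i * Real.log (2 * q i / (p i + q i)))) ≤ (∑ i, ((p i + q i)/2) * Real.log ((p i + q i) / (2 * p i))) ∧ (∑ i, ((p i + q i)/2) * Real.log ((p i + q i) / (2 * p i))) ≤ (1/r) * (((1:ℝ)/2) * ∑ i, (p i * Real.log (2 * p i / (p i + q i)) + q i * Real.log (2 * q i / (p i + q i)))) := by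
  have hne : Nonempty (Fin n) := by
    rcases Nat.eq_zero_or_pos n with h | h
    · subst h; simp at hp1
    · exact Fin.pos_iff_nonempty.mp h
  have hR1 : 1 ≤ R := by
    by_contra hc
    push_neg at hc
    have hlt : ∀ i ∈ Finset.univ, p i < q i := fun i _ =>
      (div_lt_one (hq i)).1 (lt_of_le_of_lt (hrR i).2 hc)
    have := Finset.sum_lt_sum_of_nonempty Finset.univ_nonempty hlt
    rw [hp1, hq1] at this; exact lt_irrefl 1 this
  have hr1 : r ≤ 1 := by
    by_contra hc
    push_neg at hc
    have hlt : ∀ i ∈ Finset.univ, q i < p i := fun i _ =>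
      (one_lt_div (hq i)).1 (lt_of_lt_of_le hc (hrR i).1)
    have := Finset.sum_lt_sum_of_nonempty Finset.univ_nonempty hlt
    rw [hp1, hq1] at this; exact lt_irrefl 1 this
  have hR0 : (0:ℝ) < R := lt_of_lt_of_le one_pos hR1
  set G := ∑ i, ((p i + q i)/2) * Real.log ((p i + q i) / (2 * p i)) with hG
  set I := ∑ i, (p i * Real.log (2 * p i / (p i + q i)) + q i * Real.log (2 * q i / (p i + q i))) with hI
  -- first inequality
  have hsum1 : R * G - (1/2) * I = ∑ i, q i * FF (R+1) (1/2) (R/2) (p i / q i) := by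
    have h := Finset.sum_congr rfl (fun i (_ : i ∈ Finset.univ) =>
      keyA R (p i) (q i) (hp i) (hq i))
    rw [Finset.sum_sub_distrib, Finset.sum_sub_distrib, ← Finset.mul_sum, ← Finset.mul_sum,
      ← Finset.mul_sum, Finset.sum_sub_distrib, hp1, hq1] at h
    rw [hG, hI]
    linarith [h]
  have hnn1 : 0 ≤ ∑ i, q i * FF (R+1) (1/2) (R/2) (p i / q i) :=
    Finset.sum_nonneg fun i _ =>
      mul_nonneg (hq i).le (lemA hR1 (div_pos (hp i) (hq i)) (hrR i).2)
  have hsum2 : (1/2) * I - r * G = ∑ i, q i * FF (-(1+r)) (-(1/2)) (-(r/2)) (p i / q i) := by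
    have h := Finset.sum_congr rfl (fun i (_ : i ∈ Finset.univ) =>
      keyB r (p i) (q i) (hp i) (hq i))
    rw [Finset.sum_sub_distrib, Finset.sum_add_distrib, ← Finset.mul_sum, ← Finset.mul_sum,
      ← Finset.mul_sum, Finset.sum_sub_distrib, hp1, hq1] at h
    rw [hG, hI]
    linarith [h]
  have hnn2 : 0 ≤ ∑ i, q i * FF (-(1+r)) (-(1/2)) (-(r/2)) (p i / q i) :=
    Finset.sum_nonneg fun i _ =>
      mul_nonneg (hq i).le (lemB hr hr1 (hrR i).1)
  constructor
  · rw [one_div, inv_mul_le_iff₀ hR0]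
    linarith
  · rw [one_div, le_inv_mul_iff₀ hr]
    linarith
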